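/- Let X be a shift space over alphabet A, k ≥ 1, and let X^(k) be the k-th higher block shift obtained via a bijection f: L_k(X) → A_k, extended to f: L_{≥k}(X) → L(X^(k)) by f(a₁⋯aₙ) = f(a₁⋯a_k)⋯f(a_{n-k+1}⋯aₙ). Then for every w ∈ L(X) with |w| ≥ k, the extension graph E₁(w, X) is isomorphic (as a bipartite graph) to E₁(f(w), X^(k)); consequently X is eventually dendric if and only if X^(k) is eventually dendric. -/

import Mathlib

/-- `L` is factorial: factors of its elements belong to it. -/
def Factorial {A : Type*} (L : Set (List A)) : Prop :=
  ∀ u v : List A, u ++ v ∈ L → u ∈ L ∧ v ∈ L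

/-- `L` is (bi)extendable: every word extends by a letter on both sides. -/
def Extendable {A : Type*} (L : Set (List A)) : Prop :=
  ∀ w ∈ L, ∃ a b : A, a :: (w ++ [b]) ∈ L

/-- number of one-letter left extensions `ℓ(w)`. -/
noncomputable def lcount {A : Type*} (L : Set (List A)) (w : List A) : ℕ :=
  Set.ncard {a : A | a :: w ∈ L}

/-- number of one-letter right extensions `r(w)`. -/
noncomputable def rcount {A : Type*} (L : Set (List A)) (w : List A) : ℕ :=
  Set.ncard {b : A | w ++ [b] ∈ L}

/-- number of one-letter bi-extensions `e(w)`. -/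
noncomputable def ecount {A : Type*} (L : Set (List A)) (w : List A) : ℕ :=
  Set.ncard {p : A × A | p.1 :: (w ++ [p.2]) ∈ L}
/-- The extension graph `E₁(w)`: bipartite graph on `L₁(w) ⊔ R₁(w)` with
edges the pairs `(a,b)` such that `awb ∈ L`. -/
def extGraph {A : Type*} (L : Set (List A)) (w : List A) :
    SimpleGraph ({a : A // a :: w ∈ L} ⊕ {b : A // w ++ [b] ∈ L}) where
  Adj x y :=
    match x, y with
    | Sum.inl a, Sum.inr b => a.1 :: (w ++ [b.1]) ∈ L
    | Sum.inr b, Sum.inl a => a.1 :: (w ++ [b.1]) ∈ L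
    | _, _ => False
  symm := by constructor; rintro (a | b) (c | d) h <;> first | exact h | exact h.elim
  loopless := by constructor; rintro (a | b) h <;> exact h.elim

/-- `L` is eventually dendric with threshold `m`. -/
def EvDendricWith {A : Type*} (L : Set (List A)) (m : ℕ) : Prop :=
  ∀ w ∈ L, m ≤ w.length → (extGraph L w).IsTree

/-- `L` is eventually dendric. -/
def EvDendric {A : Type*} (L : Set (List A)) : Prop :=
  ∃ m, EvDendricWith L m

/-- The language of a set `X ⊆ A^ℤ` of two-sided infinite words. -/
def lang {A : Type*} (X : Set (ℤ → A)) : Set (List A) :=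
  {w | ∃ x ∈ X, ∃ k : ℤ, ∀ i : Fin w.length, w.get i = x (k + (i : ℤ))}

/-- The `k`-th higher block code determined by `f` on `k`-blocks. -/
def blockCode {A B : Type*} (f : List A → B) (k : ℕ) (x : ℤ → A) : ℤ → B :=
  fun n => f (List.ofFn fun j : Fin k => x (n + (j : ℤ)))

/-- The image of a word of length `≥ k` under the extended higher block map
`f(a₁⋯aₙ) = f(a₁⋯a_k)⋯f(a_{n-k+1}⋯aₙ)`. -/
def blockWord {A B : Type*} (f : List A → B) (k : ℕ) (w : List A) : List B :=
  List.ofFn fun i : Fin (w.length - k + 1) => f ((w.drop (i : ℕ)).take k)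

section HigherBlock

variable {A B : Type*}

/-- A segment of a bi-infinite word. -/
def hbSeg (x : ℤ → A) (m : ℤ) (n : ℕ) : List A :=
  List.ofFn fun i : Fin n => x (m + (i : ℤ))

@[simp] lemma hbSeg_length (x : ℤ → A) (m : ℤ) (n : ℕ) : (hbSeg x m n).length = n := by
  simp [hbSeg]

@[simp] lemma hbSeg_getElem (x : ℤ → A) (m : ℤ) (n i : ℕ) (h : i < (hbSeg x m n).length) :
    (hbSeg x m n)[i] = x (m + (i : ℤ)) := by
  simp [hbSeg]

lemma mem_lang_iff {X : Set (ℤ → A)} {w : List A} :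
    w ∈ lang X ↔ ∃ x ∈ X, ∃ m : ℤ, ∀ i : ℕ, (h : i < w.length) → w[i] = x (m + (i : ℤ)) := by
  constructor
  · rintro ⟨x, hx, m, hw⟩
    exact ⟨x, hx, m, fun i h => by simpa using hw ⟨i, h⟩⟩
  · rintro ⟨x, hx, m, hw⟩
    exact ⟨x, hx, m, fun i => by simpa [List.get_eq_getElem] using hw i i.2⟩

lemma hbSeg_mem_lang {X : Set (ℤ → A)} {x : ℤ → A} (hx : x ∈ X) (m : ℤ) (n : ℕ) :
    hbSeg x m n ∈ lang X :=
  mem_lang_iff.2 ⟨x, hx, m, fun i h => by simp⟩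

lemma exists_hbSeg {X : Set (ℤ → A)} {w : List A} (hw : w ∈ lang X) :
    ∃ x ∈ X, ∃ m : ℤ, w = hbSeg x m w.length := by
  obtain ⟨x, hx, m, h⟩ := mem_lang_iff.1 hw
  refine ⟨x, hx, m, List.ext_getElem (by simp) fun i h1 h2 => ?_⟩
  simpa using h i h1

lemma lang_infix {X : Set (ℤ → A)} {u v : List A} (h : v <:+: u) (hu : u ∈ lang X) :
    v ∈ lang X := by
  obtain ⟨s, t, rfl⟩ := h
  obtain ⟨x, hx, m, hw⟩ := mem_lang_iff.1 hu
  refine mem_lang_iff.2 ⟨x, hx, m + s.length, fun i hi => ?_⟩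
  have h1 : s.length + i < (s ++ v ++ t).length := by simp; omega
  have h2 : ((s ++ v) ++ t)[s.length + i]'h1 = v[i] := by
    rw [List.getElem_append_left (by simp; omega), List.getElem_append_right (by omega)]
    congr 1
    omega
  have := hw (s.length + i) h1
  rw [h2] at this
  rw [this]
  congr 1
  push_cast
  ring

@[simp] lemma blockWord_length (f : List A → B) (k : ℕ) (w : List A) :
    (blockWord f k w).length = w.length - k + 1 := by simp [blockWord]

lemma blockWord_getElem (f : List A → B) (k : ℕ) (w : List A) (i : ℕ)
    (h : i < (blockWord f k w).length) :
    (blockWord f k w)[i] = f ((w.drop i).take k) := by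
  simp only [blockWord, List.getElem_ofFn]

lemma drop_take_mem_lang {X : Set (ℤ → A)} {w : List A} (hw : w ∈ lang X) (i k : ℕ) :
    (w.drop i).take k ∈ lang X :=
  lang_infix (((w.drop i).take_prefix k).isInfix.trans (w.drop_suffix i).isInfix) hw

lemma blockWord_hbSeg (f : List A → B) {k : ℕ} (x : ℤ → A) (m : ℤ) {n : ℕ} (hkn : k ≤ n) :
    blockWord f k (hbSeg x m n) = hbSeg (blockCode f k x) m (n - k + 1) := by
  refine List.ext_getElem (by simp) fun i h1 h2 => ?_
  rw [blockWord_getElem, hbSeg_getElem]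
  have hi : i ≤ n - k := by simp at h1; omega
  have harg : ((hbSeg x m n).drop i).take k
      = List.ofFn fun j : Fin k => x (m + (i : ℤ) + (j : ℤ)) := by
    refine List.ext_getElem (by simp; omega) fun j hj1 hj2 => ?_
    rw [List.getElem_take, List.getElem_drop, hbSeg_getElem, List.getElem_ofFn]
    congr 1
    push_cast
    ring
  rw [harg]
  rfl

lemma blockWord_mem {X : Set (ℤ → A)} (f : List A → B) {k : ℕ} {w : List A}
    (hw : w ∈ lang X) (hkw : k ≤ w.length) :
    blockWord f k w ∈ lang (blockCode f k '' X) := by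
  obtain ⟨x, hx, m, hw'⟩ := exists_hbSeg hw
  rw [hw', blockWord_hbSeg f x m hkw]
  exact hbSeg_mem_lang (Set.mem_image_of_mem _ hx) m _

lemma exists_blockWord {X : Set (ℤ → A)} {f : List A → B} {k : ℕ} (hk : 1 ≤ k) {v : List B}
    (hv : v ∈ lang (blockCode f k '' X)) (hv1 : 1 ≤ v.length) :
    ∃ u ∈ lang X, u.length = v.length + k - 1 ∧ blockWord f k u = v := by
  obtain ⟨y, ⟨x, hx, hxy⟩, m, hveq⟩ := exists_hbSeg hv
  refine ⟨hbSeg x m (v.length + k - 1), hbSeg_mem_lang hx m _, by simp, ?_⟩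
  rw [blockWord_hbSeg f x m (by omega), hxy,
    show v.length + k - 1 - k + 1 = v.length by omega]
  exact hveq.symm

lemma blockWord_inj {X : Set (ℤ → A)} {f : List A → B} {k : ℕ} (hk : 1 ≤ k)
    (hf : Set.InjOn f {w : List A | w ∈ lang X ∧ w.length = k})
    {u u' : List A} (hu : u ∈ lang X) (hu' : u' ∈ lang X)
    (hku : k ≤ u.length) (hku' : k ≤ u'.length)
    (h : blockWord f k u = blockWord f k u') : u = u' := by
  have hlen : u.length = u'.length := by
    have := congrArg List.length h
    simp at this
    omega
  have hblock : ∀ i, i ≤ u.length - k → (u.drop i).take k = (u'.drop i).take k := by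
    intro i hi
    have h1 : i < (blockWord f k u).length := by simp; omega
    have h2 : i < (blockWord f k u').length := by simp; omega
    have heq := List.getElem_of_eq h h1
    rw [blockWord_getElem, blockWord_getElem] at heq
    exact hf ⟨drop_take_mem_lang hu i k, by simp; omega⟩
      ⟨drop_take_mem_lang hu' i k, by simp; omega⟩ heq
  refine List.ext_getElem hlen fun j hj1 hj2 => ?_
  have hb := hblock (min j (u.length - k)) (min_le_right _ _)
  have hji : min j (u.length - k) ≤ j := min_le_left _ _
  have hjk : j - min j (u.length - k) < k := by omega
  have e1 : ((u.drop (min j (u.length - k))).take k)[j - min j (u.length - k)]'(by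
      simp; omega) = u[j] := by
    rw [List.getElem_take, List.getElem_drop]
    congr 1
    omega
  have e2 : ((u'.drop (min j (u.length - k))).take k)[j - min j (u.length - k)]'(by
      simp; omega) = u'[j] := by
    rw [List.getElem_take, List.getElem_drop]
    congr 1
    omega
  rw [← e1, ← e2]
  exact List.getElem_of_eq hb _

lemma blockWord_cons (f : List A → B) {k : ℕ} (hk : 1 ≤ k) {w : List A} (hkw : k ≤ w.length)
    (a : A) :
    blockWord f k (a :: w) = f (a :: w.take (k - 1)) :: blockWord f k w := by
  obtain ⟨k', rfl⟩ : ∃ k', k = k' + 1 := ⟨k - 1, by omega⟩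
  simp only [Nat.add_sub_cancel]
  refine List.ext_getElem (by simp; omega) fun i h1 h2 => ?_
  rw [blockWord_getElem]
  match i with
  | 0 =>
    rw [List.getElem_cons_zero, List.drop_zero, List.take_succ_cons]
  | i + 1 =>
    rw [List.getElem_cons_succ, List.drop_succ_cons, blockWord_getElem]

lemma blockWord_concat (f : List A → B) {k : ℕ} (hk : 1 ≤ k) {w : List A} (hkw : k ≤ w.length)
    (b : A) :
    blockWord f k (w ++ [b])
      = blockWord f k w ++ [f (w.drop (w.length + 1 - k) ++ [b])] := by
  refine List.ext_getElem (by simp; omega) fun i h1 h2 => ?_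
  rw [blockWord_getElem]
  by_cases hi : i < w.length - k + 1
  · rw [List.getElem_append_left (by simpa using hi), blockWord_getElem,
      List.drop_append_of_le_length (by omega),
      List.take_append_of_le_length (by simp; omega)]
  · have hieq : i = w.length - k + 1 := by simp at h1; omega
    rw [List.getElem_append_right (by simpa using not_lt.1 hi)]
    have hlast : ((w ++ [b]).drop i).take k = w.drop (w.length + 1 - k) ++ [b] := by
      rw [List.drop_append_of_le_length (by omega),
        List.take_of_length_le (by simp; omega), hieq,
        show w.length - k + 1 = w.length + 1 - k by omega]
    rw [hlast]
    simp

lemma blockWord_cons_concat (f : List A → B) {k : ℕ} (hk : 1 ≤ k) {w : List A}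
    (hkw : k ≤ w.length) (a b : A) :
    blockWord f k (a :: (w ++ [b]))
      = f (a :: w.take (k - 1))
        :: (blockWord f k w ++ [f (w.drop (w.length + 1 - k) ++ [b])]) := by
  rw [blockWord_cons f hk (by simp; omega) a, blockWord_concat f hk hkw b,
    List.take_append_of_le_length (by omega)]

end HigherBlock

lemma isTree_map_iso {V V' : Type*} {G : SimpleGraph V} {G' : SimpleGraph V'}
    (φ : G ≃g G') (h : G.IsTree) : G'.IsTree := by
  have hne : Nonempty V := h.1.nonempty
  have : Nonempty V' := ⟨φ hne.some⟩
  refine ⟨SimpleGraph.Connected.mk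
    (h.1.preconnected.map φ.toHom φ.toEquiv.surjective), ?_⟩
  intro v c hc'
  exact h.2 (c.map φ.symm.toHom)
    ((SimpleGraph.Walk.map_isCycle_iff_of_injective
      (RelIso.injective φ.symm)).2 hc')

/-- For the `k`-th higher block shift `X⁽ᵏ⁾ = γ_k(X)`, the extension graph of
any `w ∈ L(X)` of length `≥ k` is isomorphic to that of `f(w)` in `X⁽ᵏ⁾`;
consequently `X` is eventually dendric iff `X⁽ᵏ⁾` is. -/
theorem stmt19 {A B : Type*} [Fintype A] [Fintype B]
    (X : Set (ℤ → A)) (hshift : ∀ x : ℤ → A, x ∈ X ↔ (fun n => x (n + 1)) ∈ X)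
    (k : ℕ) (hk : 1 ≤ k) (f : List A → B)
    (hf : Set.BijOn f {w : List A | w ∈ lang X ∧ w.length = k} Set.univ) :
    (∀ w ∈ lang X, k ≤ w.length →
      Nonempty (extGraph (lang X) w ≃g
        extGraph (lang (blockCode f k '' X)) (blockWord f k w))) ∧
    (EvDendric (lang X) ↔ EvDendric (lang (blockCode f k '' X))) := by
  have hinj := hf.injOn
  have key : ∀ w ∈ lang X, k ≤ w.length →
      Nonempty (extGraph (lang X) w ≃g
        extGraph (lang (blockCode f k '' X)) (blockWord f k w)) := by
    intro w hw hkw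
    set L' := lang (blockCode f k '' X) with hL'
    set W := blockWord f k w with hWdef
    have hWlen : W.length = w.length - k + 1 := by simp [hWdef]
    set gl : A → B := fun a => f (a :: w.take (k - 1)) with hgl
    set gr : A → B := fun b => f (w.drop (w.length + 1 - k) ++ [b]) with hgr
    -- block memberships
    have B1 : ∀ a : A, a :: w ∈ lang X →
        a :: w.take (k - 1) ∈ lang X ∧ (a :: w.take (k - 1)).length = k := by
      intro a haw
      have h1 : a :: w.take (k - 1) = (a :: w).take k := by
        conv_rhs => rw [show k = (k - 1) + 1 by omega]
        rw [List.take_succ_cons]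
      constructor
      · rw [h1]; exact lang_infix ((a :: w).take_prefix k).isInfix haw
      · simp; omega
    have B2 : ∀ b : A, w ++ [b] ∈ lang X →
        w.drop (w.length + 1 - k) ++ [b] ∈ lang X ∧
          (w.drop (w.length + 1 - k) ++ [b]).length = k := by
      intro b hwb
      have hsfx : w.drop (w.length + 1 - k) ++ [b] <:+ w ++ [b] :=
        ⟨w.take (w.length + 1 - k), by rw [← List.append_assoc, List.take_append_drop]⟩
      exact ⟨lang_infix hsfx.isInfix hwb, by simp; omega⟩
    -- memberships of images
    have M1 : ∀ a : A, a :: w ∈ lang X → gl a :: W ∈ L' := by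
      intro a haw
      have := blockWord_mem f haw (show k ≤ (a :: w).length by simp; omega)
      rwa [blockWord_cons f hk hkw a] at this
    have M2 : ∀ b : A, w ++ [b] ∈ lang X → W ++ [gr b] ∈ L' := by
      intro b hwb
      have := blockWord_mem f hwb (show k ≤ (w ++ [b]).length by simp; omega)
      rwa [blockWord_concat f hk hkw b] at this
    have M3 : ∀ a b : A, a :: (w ++ [b]) ∈ lang X → gl a :: (W ++ [gr b]) ∈ L' := by
      intro a b h
      have := blockWord_mem f h (show k ≤ (a :: (w ++ [b])).length by simp; omega)
      rwa [blockWord_cons_concat f hk hkw a b] at this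
    -- left surjectivity
    have S1 : ∀ c : B, c :: W ∈ L' → ∃ a : A, ∃ h : a :: w ∈ lang X, gl a = c := by
      intro c hcW
      obtain ⟨u, hu, hulen, hubw⟩ := exists_blockWord hk hcW (by simp)
      have hul : u.length = w.length + 1 := by
        simp only [List.length_cons, hWlen] at hulen; omega
      obtain ⟨a, t, rfl⟩ : ∃ a t, u = a :: t := by
        cases u with
        | nil => simp at hul
        | cons a t => exact ⟨a, t, rfl⟩
      have htl : t.length = w.length := by simpa using hul
      rw [blockWord_cons f hk (by omega) a] at hubw
      obtain ⟨hc, hWt⟩ := List.cons_eq_cons.1 hubw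
      have ht_mem : t ∈ lang X := lang_infix ⟨[a], [], by simp⟩ hu
      have htw : t = w := blockWord_inj hk hinj ht_mem hw (by omega) hkw (hWdef ▸ hWt)
      subst htw
      exact ⟨a, hu, hc⟩
    -- right surjectivity
    have S2 : ∀ d : B, W ++ [d] ∈ L' → ∃ b : A, ∃ h : w ++ [b] ∈ lang X, gr b = d := by
      intro d hWd
      obtain ⟨u, hu, hulen, hubw⟩ := exists_blockWord hk hWd (by simp)
      have hul : u.length = w.length + 1 := by
        simp only [List.length_append, List.length_singleton, hWlen] at hulen; omega
      obtain ⟨t, b, rfl⟩ : ∃ t b, u = t ++ [b] := by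
        rcases List.eq_nil_or_concat u with rfl | ⟨t, b, rfl⟩
        · simp at hul
        · exact ⟨t, b, by simp⟩
      have htl : t.length = w.length := by simp at hul; omega
      rw [blockWord_concat f hk (by omega) b] at hubw
      obtain ⟨hWt, hd⟩ := List.append_inj hubw (by simp [hWlen]; omega)
      have ht_mem : t ∈ lang X := lang_infix ⟨[], [b], by simp⟩ hu
      have htw : t = w := blockWord_inj hk hinj ht_mem hw (by omega) hkw (hWdef ▸ hWt)
      subst htw
      exact ⟨b, hu, by simpa [hgr, htl] using (List.cons_eq_cons.1 hd).1⟩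
    -- edge backward
    have E : ∀ a b : A, a :: w ∈ lang X → w ++ [b] ∈ lang X →
        gl a :: (W ++ [gr b]) ∈ L' → a :: (w ++ [b]) ∈ lang X := by
      intro a b haw hwb hmem
      obtain ⟨u, hu, hulen, hubw⟩ := exists_blockWord hk hmem (by simp)
      have hul : u.length = w.length + 2 := by
        simp [hWlen] at hulen
        omega
      obtain ⟨a', t, rfl⟩ : ∃ a' t, u = a' :: t := by
        cases u with
        | nil => simp at hul
        | cons a' t => exact ⟨a', t, rfl⟩
      have htl : t.length = w.length + 1 := by simpa using hul
      rw [blockWord_cons f hk (by omega) a'] at hubw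
      obtain ⟨hc, hWt⟩ := List.cons_eq_cons.1 hubw
      obtain ⟨t', b', rfl⟩ : ∃ t' b', t = t' ++ [b'] := by
        rcases List.eq_nil_or_concat t with rfl | ⟨t', b', rfl⟩
        · simp at htl
        · exact ⟨t', b', by simp⟩
      have htl' : t'.length = w.length := by simp at htl; omega
      rw [blockWord_concat f hk (by omega) b'] at hWt
      obtain ⟨hWt', hd⟩ := List.append_inj hWt (by simp [hWlen]; omega)
      have ht'_mem : t' ∈ lang X := lang_infix ⟨[a'], [b'], by simp⟩ hu
      have htw : t' = w := blockWord_inj hk hinj ht'_mem hw (by omega) hkw (hWdef ▸ hWt')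
      rw [htw] at hu hc hd
      -- identify a' = a
      have ha'w : a' :: w ∈ lang X := lang_infix ⟨[], [b'], by simp⟩ hu
      have hwb' : w ++ [b'] ∈ lang X := lang_infix ⟨[a'], [], by simp⟩ hu
      rw [List.take_append_of_le_length (show k - 1 ≤ w.length by omega)] at hc
      have haa : a' = a := by
        have h2 := hinj (Set.mem_setOf.2 (B1 a' ha'w)) (Set.mem_setOf.2 (B1 a haw)) hc
        exact (List.cons_eq_cons.1 h2).1
      have hbb : b' = b := by
        have h2 := hinj (Set.mem_setOf.2 (B2 b' hwb')) (Set.mem_setOf.2 (B2 b hwb))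
          ((List.cons_eq_cons.1 hd).1)
        have h3 := List.append_inj' h2 rfl
        simpa using h3.2
      rw [haa, hbb] at hu
      exact hu
    -- injectivity of the vertex maps
    have I1 : ∀ (a a' : {a : A // a :: w ∈ lang X}), gl a.1 = gl a'.1 → a = a' := by
      intro a a' h
      have := hinj (Set.mem_setOf.2 (B1 a.1 a.2)) (Set.mem_setOf.2 (B1 a'.1 a'.2)) h
      exact Subtype.ext (List.cons_eq_cons.1 this).1
    have I2 : ∀ (b b' : {b : A // w ++ [b] ∈ lang X}), gr b.1 = gr b'.1 → b = b' := by
      intro b b' h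
      have := hinj (Set.mem_setOf.2 (B2 b.1 b.2)) (Set.mem_setOf.2 (B2 b'.1 b'.2)) h
      have := List.append_inj' this rfl
      exact Subtype.ext (by simpa using this.2)
    -- the vertex equivalences
    let eL : {a : A // a :: w ∈ lang X} ≃ {c : B // c :: W ∈ L'} :=
      Equiv.ofBijective (fun a => ⟨gl a.1, M1 a.1 a.2⟩)
        ⟨fun a a' h => I1 a a' (by simpa using congrArg Subtype.val h),
         fun c => by
          obtain ⟨a, ha, hac⟩ := S1 c.1 c.2
          exact ⟨⟨a, ha⟩, Subtype.ext hac⟩⟩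
    let eR : {b : A // w ++ [b] ∈ lang X} ≃ {d : B // W ++ [d] ∈ L'} :=
      Equiv.ofBijective (fun b => ⟨gr b.1, M2 b.1 b.2⟩)
        ⟨fun b b' h => I2 b b' (by simpa using congrArg Subtype.val h),
         fun d => by
          obtain ⟨b, hb, hbd⟩ := S2 d.1 d.2
          exact ⟨⟨b, hb⟩, Subtype.ext hbd⟩⟩
    refine ⟨⟨Equiv.sumCongr eL eR, ?_⟩⟩
    rintro (a | b) (a' | b')
    · exact Iff.rfl
    · show gl a.1 :: (W ++ [gr b'.1]) ∈ L' ↔ a.1 :: (w ++ [b'.1]) ∈ lang X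
      exact ⟨E a.1 b'.1 a.2 b'.2, M3 a.1 b'.1⟩
    · show gl a'.1 :: (W ++ [gr b.1]) ∈ L' ↔ a'.1 :: (w ++ [b.1]) ∈ lang X
      exact ⟨E a'.1 b.1 a'.2 b.2, M3 a'.1 b.1⟩
    · exact Iff.rfl
  refine ⟨key, ?_, ?_⟩
  · rintro ⟨m, hm⟩
    refine ⟨m + 1, fun v hv hlen => ?_⟩
    obtain ⟨u, hu, hulen, hbv⟩ := exists_blockWord hk hv (by omega)
    have hku : k ≤ u.length := by omega
    have hmu : m ≤ u.length := by omega
    obtain ⟨φ⟩ := key u hu hku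
    rw [← hbv]
    exact isTree_map_iso φ (hm u hu hmu)
  · rintro ⟨m, hm⟩
    refine ⟨m + k, fun w hw hlen => ?_⟩
    have hkw : k ≤ w.length := by omega
    obtain ⟨φ⟩ := key w hw hkw
    refine isTree_map_iso φ.symm (hm (blockWord f k w) (blockWord_mem f hw hkw) ?_)
    rw [blockWord_length]
    omega
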